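/- Let K be a field of characteristic p, n ≥ 2, κ ∈ F_p^×, and k the integer with 0 < k < p and κk ≡ -1 mod p. Write Q(t,z;κ) = (Q_1,…,Q_n) (the vector of polynomials Q_a = Φ·η_a as above) in the Pochhammer basis: Q(t,z;κ) = ∑_i Q^i(z;κ)(t;κ)_i. Then for every positive integer ℓ, the coordinates of Q^{ℓp-1}(z;κ) sum to zero: ∑_{a=1}^n Q^{ℓp-1}_a(z;κ) = 0. -/

import Mathlib

open Finset Polynomial

/-- The κ-Pochhammer polynomial `(t;κ)_m = ∏_{i=1}^m (t-(i-1)κ)`. -/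
def poch {R : Type*} [CommRing R] (κ t : R) (m : ℕ) : R :=
  ∏ i ∈ Finset.range m, (t - (i : R) * κ)

lemma poch_zero {R : Type*} [CommRing R] (κ t : R) : poch κ t 0 = 1 := by
  simp [poch]

lemma poch_succ {R : Type*} [CommRing R] (κ t : R) (m : ℕ) :
    poch κ t (m + 1) = poch κ t m * (t - (m : R) * κ) :=
  Finset.prod_range_succ _ _

lemma poch_succ' {R : Type*} [CommRing R] (κ t : R) (m : ℕ) :
    poch κ t (m + 1) = t * poch κ (t - κ) m := by
  rw [poch, poch, Finset.prod_range_succ', mul_comm]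
  congr 1
  · simp
  · exact Finset.prod_congr rfl fun i _ => by push_cast; ring

lemma poch_shift {R : Type*} [CommRing R] (κ t : R) (m : ℕ) :
    poch κ (t + κ) (m + 1) = poch κ t (m + 1) + ((m + 1 : ℕ) : R) * κ * poch κ t m := by
  rw [poch_succ', add_sub_cancel_right, poch_succ]
  push_cast
  ring

lemma poch_sub_poch {R : Type*} [CommRing R] (κ t : R) (m : ℕ) :
    poch κ (t - κ) (m + 1) - poch κ t (m + 1) =
      poch κ (t - κ) m * (-((m + 1 : ℕ) : R) * κ) := by
  rw [poch_succ, poch_succ']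
  push_cast
  ring

lemma poch_X_sub_C_eq {R : Type*} [CommRing R] (r s : R) (m : ℕ) :
    poch (C r) (X - C s) m = ∏ i ∈ Finset.range m, (X - C (s + (i : R) * r)) := by
  refine Finset.prod_congr rfl fun i _ => ?_
  rw [map_add, map_mul, map_natCast]
  ring

lemma poch_X_sub_C_monic {R : Type*} [CommRing R] (r s : R) (m : ℕ) :
    (poch (C r) (X - C s) m).Monic := by
  rw [poch_X_sub_C_eq]
  exact monic_prod_of_monic _ _ fun i _ => monic_X_sub_C _

lemma poch_X_sub_C_natDegree {R : Type*} [CommRing R] [Nontrivial R] (r s : R) (m : ℕ) :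
    (poch (C r) (X - C s) m).natDegree = m := by
  rw [poch_X_sub_C_eq, natDegree_prod_of_monic _ _ (fun i _ => monic_X_sub_C _)]
  simp only [natDegree_X_sub_C, Finset.sum_const, Finset.card_range, smul_eq_mul, mul_one]

lemma poch_X_monic {R : Type*} [CommRing R] (r : R) (m : ℕ) :
    (poch (C r) X m).Monic := by
  simpa using poch_X_sub_C_monic r 0 m

lemma poch_X_natDegree {R : Type*} [CommRing R] [Nontrivial R] (r : R) (m : ℕ) :
    (poch (C r) X m).natDegree = m := by
  simpa using poch_X_sub_C_natDegree r 0 m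

lemma poch_comp {R : Type*} [CommRing R] (r : R) (t q : Polynomial R) (m : ℕ) :
    (poch (Polynomial.C r) t m).comp q = poch (Polynomial.C r) (t.comp q) m := by
  induction m with
  | zero => simp [poch_zero]
  | succ m ih =>
      rw [poch_succ, mul_comp, ih, sub_comp, mul_comp, natCast_comp, C_comp, poch_succ]

lemma exists_expansion {R : Type*} [CommRing R] [Nontrivial R] (r : R) :
    ∀ (M : ℕ) (P : Polynomial R), P.degree < (M : ℕ) →
      ∃ a : ℕ → R, P = ∑ i ∈ Finset.range M, C (a i) * poch (C r) X i := by
  intro M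
  induction M with
  | zero =>
      intro P hP
      have hP0 : P = 0 := by
        by_contra h
        rw [degree_eq_natDegree h] at hP
        exact absurd (by exact_mod_cast hP) (Nat.not_lt_zero _)
      exact ⟨0, by simp [hP0]⟩
  | succ M ih =>
      intro P hP
      set c := P.coeff M with hc
      have hdeg : (poch (C r) X M).natDegree = M := poch_X_natDegree r M
      have hcoeff : (poch (C r) X M).coeff M = 1 := by
        have := (poch_X_monic r M).coeff_natDegree
        rwa [hdeg] at this
      have h1 : (P - C c * poch (C r) X M).degree < (M : ℕ) := by
        rw [degree_lt_iff_coeff_zero]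
        intro mm hmm
        have hmm' : M ≤ mm := by exact_mod_cast hmm
        rw [coeff_sub, coeff_C_mul]
        rcases eq_or_lt_of_le hmm' with h | h
        · rw [← h, hcoeff, ← hc, mul_one, sub_self]
        · rw [coeff_eq_zero_of_degree_lt (lt_of_lt_of_le hP (by exact_mod_cast h)),
            coeff_eq_zero_of_natDegree_lt (show (poch (C r) X M).natDegree < mm by rw [hdeg]; exact h), mul_zero, sub_zero]
      obtain ⟨a, ha⟩ := ih _ h1
      refine ⟨Function.update a M c, ?_⟩
      rw [Finset.sum_range_succ,
        Finset.sum_congr rfl (fun i hi => by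
          rw [Function.update_of_ne (Nat.ne_of_lt (Finset.mem_range.mp hi))]),
        ← ha, Function.update_self]
      ring

lemma expansion_unique {R : Type*} [CommRing R] [Nontrivial R] (r : R) :
    ∀ (M : ℕ) (w : ℕ → R), (∑ i ∈ Finset.range M, C (w i) * poch (C r) X i) = 0 →
      ∀ i < M, w i = 0 := by
  intro M
  induction M with
  | zero => intro w _ i hi; exact absurd hi (Nat.not_lt_zero _)
  | succ M ih =>
      intro w hw
      have hM : w M = 0 := by
        have hcoeff : (poch (C r) X M).coeff M = 1 := by
          have := (poch_X_monic r M).coeff_natDegree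
          rwa [poch_X_natDegree r M] at this
        have h := congrArg (fun q => Polynomial.coeff q M) hw
        simp only [finset_sum_coeff, coeff_C_mul, coeff_zero] at h
        rw [Finset.sum_range_succ,
          Finset.sum_eq_zero (fun i hi => by
            rw [coeff_eq_zero_of_natDegree_lt
              (by rw [poch_X_natDegree]; exact Finset.mem_range.mp hi), mul_zero]),
          zero_add, hcoeff, mul_one] at h
        exact h
      have hrest : (∑ i ∈ Finset.range M, C (w i) * poch (C r) X i) = 0 := by
        rw [Finset.sum_range_succ, hM] at hw
        simpa using hw
      intro i hi
      rcases Nat.lt_succ_iff_lt_or_eq.mp hi with h | h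
      · exact ih w hrest i h
      · rw [h]; exact hM

lemma expansion_unique' {R : Type*} [CommRing R] [Nontrivial R] (r : R) (M : ℕ) (u v : ℕ → R)
    (h : (∑ i ∈ Finset.range M, C (u i) * poch (C r) X i)
        = ∑ i ∈ Finset.range M, C (v i) * poch (C r) X i) :
    ∀ i < M, u i = v i := by
  have h0 : (∑ i ∈ Finset.range M, C (u i - v i) * poch (C r) X i) = 0 := by
    simp only [map_sub, sub_mul, Finset.sum_sub_distrib, h, sub_self]
  intro i hi
  exact sub_eq_zero.mp (expansion_unique r M _ h0 i hi)

lemma telescope {R : Type*} [CommRing R] {n : ℕ} (A B : Fin n → R) :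
    ∑ c : Fin n, ((∏ j ∈ univ.filter (· < c), A j) * (A c - B c) *
      ∏ j ∈ univ.filter (fun j => c < j), B j)
      = (∏ j, A j) - ∏ j, B j := by
  set f : ℕ → R := fun m =>
    (univ.filter (fun j : Fin n => (j : ℕ) < m)).prod A *
      (univ.filter (fun j : Fin n => m ≤ (j : ℕ))).prod B with hf
  have hfm : ∀ m, f m = (univ.filter (fun j : Fin n => (j : ℕ) < m)).prod A *
      (univ.filter (fun j : Fin n => m ≤ (j : ℕ))).prod B := fun m => rfl
  have main := Finset.sum_range_sub f n
  rw [← Fin.sum_univ_eq_sum_range (fun m => f (m + 1) - f m) n] at main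
  have hfn : f n = ∏ j, A j := by
    rw [hfm]
    have e1 : univ.filter (fun j : Fin n => (j : ℕ) < n) = univ := by
      ext j; simp [j.isLt]
    have e2 : univ.filter (fun j : Fin n => n ≤ (j : ℕ)) = ∅ := by
      ext j; simp [Nat.not_le.mpr j.isLt]
    rw [e1, e2, Finset.prod_empty, mul_one]
  have hf0 : f 0 = ∏ j, B j := by
    rw [hfm]
    have e1 : univ.filter (fun j : Fin n => (j : ℕ) < 0) = ∅ := by
      ext j; simp
    have e2 : univ.filter (fun j : Fin n => 0 ≤ (j : ℕ)) = univ := by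
      ext j; simp
    rw [e1, e2, Finset.prod_empty, one_mul]
  rw [← hfn, ← hf0, ← main]
  refine Finset.sum_congr rfl fun c _ => ?_
  have h1 : univ.filter (fun j : Fin n => (j : ℕ) < (c : ℕ) + 1)
      = insert c (univ.filter (· < c)) := by
    ext j
    simp only [Finset.mem_filter, Finset.mem_univ, true_and, Finset.mem_insert, Fin.lt_def,
      Fin.ext_iff]
    omega
  have h2 : univ.filter (fun j : Fin n => (c : ℕ) + 1 ≤ (j : ℕ))
      = univ.filter (fun j => c < j) := by
    ext j
    simp only [Finset.mem_filter, Finset.mem_univ, true_and, Fin.lt_def]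
    omega
  have h3 : univ.filter (fun j : Fin n => (c : ℕ) ≤ (j : ℕ))
      = insert c (univ.filter (fun j => c < j)) := by
    ext j
    simp only [Finset.mem_filter, Finset.mem_univ, true_and, Finset.mem_insert, Fin.lt_def,
      Fin.ext_iff]
    omega
  have h4 : univ.filter (fun j : Fin n => (j : ℕ) < (c : ℕ))
      = univ.filter (· < c) := by
    ext j
    simp only [Finset.mem_filter, Finset.mem_univ, true_and, Fin.lt_def]
  have hc1 : c ∉ univ.filter (fun j : Fin n => j < c) := by simp
  have hc2 : c ∉ univ.filter (fun j : Fin n => c < j) := by simp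
  rw [hfm, hfm, h1, h2, h3, h4, Finset.prod_insert hc1, Finset.prod_insert hc2]
  ring

/-- The weight polynomial
`Q_c(t,z;κ) = (∏_{j<c}(t-z_j-κ;κ)_k)·(t-z_c-κ;κ)_{k-1}·(∏_{j>c}(t-z_j;κ)_k)`
as an element of `K[z_1,…,z_n][t]`. -/
noncomputable def Qpoly {K : Type*} [Field K] (n k : ℕ) (κ : K) (c : Fin n) :
    Polynomial (MvPolynomial (Fin n) K) :=
  (∏ j ∈ univ.filter (· < c),
      poch (Polynomial.C (MvPolynomial.C κ))
        (Polynomial.X - Polynomial.C (MvPolynomial.X j) -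
          Polynomial.C (MvPolynomial.C κ)) k) *
    poch (Polynomial.C (MvPolynomial.C κ))
      (Polynomial.X - Polynomial.C (MvPolynomial.X c) -
        Polynomial.C (MvPolynomial.C κ)) (k - 1) *
    ∏ j ∈ univ.filter (fun j => c < j),
      poch (Polynomial.C (MvPolynomial.C κ))
        (Polynomial.X - Polynomial.C (MvPolynomial.X j)) k

/-- The coordinates of the coefficient vector `Q^{ℓp-1}(z;κ)` in the
Pochhammer-basis expansion `Q = ∑_i Q^i(z;κ)(t;κ)_i` sum to zero. -/
theorem sum_coords_eq_zero {p : ℕ} [Fact p.Prime] {K : Type*} [Field K] [CharP K p]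
    (n : ℕ) (hn : 2 ≤ n) (k : ℕ) (hk : 0 < k) (hkp : k < p) (κ : K)
    (hκ : κ * (k : K) = -1) (ℓ : ℕ) (hℓ : 0 < ℓ)
    (N : ℕ) (hN : ℓ * p - 1 < N)
    (Qc : Fin n → ℕ → MvPolynomial (Fin n) K)
    (hQc : ∀ c : Fin n, Qpoly n k κ c =
      ∑ i ∈ Finset.range N,
        Polynomial.C (Qc c i) *
          poch (Polynomial.C (MvPolynomial.C κ)) Polynomial.X i) :
    ∑ c : Fin n, Qc c (ℓ * p - 1) = 0 := by
  classical
  obtain ⟨k', rfl⟩ : ∃ k', k = k' + 1 := ⟨k - 1, (Nat.succ_pred_eq_of_pos hk).symm⟩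
  set κP : Polynomial (MvPolynomial (Fin n) K) := Polynomial.C (MvPolynomial.C κ) with hκP
  set A : Fin n → Polynomial (MvPolynomial (Fin n) K) :=
    fun j => poch κP (Polynomial.X - Polynomial.C (MvPolynomial.X j) - κP) (k' + 1) with hA
  set B : Fin n → Polynomial (MvPolynomial (Fin n) K) :=
    fun j => poch κP (Polynomial.X - Polynomial.C (MvPolynomial.X j)) (k' + 1) with hB
  -- the unit -(k⬝κ) = 1
  have hunit : (-(((k' + 1 : ℕ) : K)) * κ) = 1 := by
    rw [neg_mul, mul_comm, hκ, neg_neg]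
  have hAB : ∀ c : Fin n,
      A c - B c = poch κP (Polynomial.X - Polynomial.C (MvPolynomial.X c) - κP) k' := by
    intro c
    have h := poch_sub_poch κP (Polynomial.X - Polynomial.C (MvPolynomial.X c)) k'
    have hcast : (-(((k' + 1 : ℕ) : Polynomial (MvPolynomial (Fin n) K))) * κP) = 1 := by
      have h1 : ((k' + 1 : ℕ) : Polynomial (MvPolynomial (Fin n) K))
          = Polynomial.C (MvPolynomial.C ((k' + 1 : ℕ) : K)) := by
        rw [map_natCast, map_natCast]
      rw [hκP, h1, ← map_neg, ← map_neg, ← map_mul, ← map_mul, hunit, map_one, map_one]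
    rw [hA, hB]
    simp only []
    rw [h, hcast, mul_one]
  -- Step 1 : telescoping
  have step1 : ∑ c : Fin n, Qpoly n (k' + 1) κ c = (∏ j, A j) - ∏ j, B j := by
    rw [← telescope A B]
    refine Finset.sum_congr rfl fun c _ => ?_
    rw [hAB c, Qpoly]
    simp only [hA, hB, Nat.add_sub_cancel, hκP]
  -- Step 2 : expansion of ∏ A
  set M := max N (n * (k' + 1) + 1) with hM
  have hAmono : ∀ j, (A j).Monic := by
    intro j
    have : A j = poch κP (Polynomial.X - Polynomial.C (MvPolynomial.X j + MvPolynomial.C κ))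
        (k' + 1) := by
      rw [hA]; simp only []; rw [map_add]; ring_nf; rfl
    rw [this, hκP]
    exact poch_X_sub_C_monic _ _ _
  have hdegA : (∏ j, A j).degree < (M : ℕ) := by
    have hmono : (∏ j, A j).Monic := monic_prod_of_monic _ _ fun j _ => hAmono j
    have hnd : (∏ j, A j).natDegree = n * (k' + 1) := by
      rw [natDegree_prod_of_monic _ _ fun j _ => hAmono j]
      have : ∀ j : Fin n, (A j).natDegree = k' + 1 := by
        intro j
        have : A j = poch κP (Polynomial.X - Polynomial.C (MvPolynomial.X j + MvPolynomial.C κ))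
            (k' + 1) := by
          rw [hA]; simp only []; rw [map_add]; ring_nf; rfl
        rw [this, hκP, poch_X_sub_C_natDegree]
      rw [Finset.sum_congr rfl fun j _ => this j]
      simp [mul_comm]
    rw [degree_eq_natDegree hmono.ne_zero, hnd]
    have : n * (k' + 1) < M := lt_of_lt_of_le (Nat.lt_succ_self _) (le_max_right _ _)
    exact_mod_cast this
  obtain ⟨a, hAexp⟩ := exists_expansion (MvPolynomial.C κ) M (∏ j, A j) hdegA
  rw [← hκP] at hAexp
  -- Step 3 : B as composition
  have hBcomp : ∏ j, B j = (∏ j, A j).comp (Polynomial.X + κP) := by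
    rw [Polynomial.prod_comp]
    refine Finset.prod_congr rfl fun j _ => ?_
    rw [hA, hB]
    simp only []
    rw [hκP, poch_comp]
    congr 1
    simp only [sub_comp, X_comp, C_comp]
    ring
  have hBexp : ∏ j, B j = ∑ i ∈ Finset.range M,
      Polynomial.C (a i) * poch κP (Polynomial.X + κP) i := by
    rw [hBcomp, hAexp, Polynomial.sum_comp]
    refine Finset.sum_congr rfl fun i _ => ?_
    rw [mul_comp, C_comp, hκP, poch_comp, X_comp]
  -- Step 4 : the difference in the Pochhammer basis
  obtain ⟨M0, hM0⟩ : ∃ M0, M = M0 + 1 :=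
    ⟨M - 1, by have : 1 ≤ N := by omega
               have : 1 ≤ M := le_trans this (le_max_left _ _)
               omega⟩
  set b : ℕ → (MvPolynomial (Fin n) K) := fun i =>
    if i < M0 then -(((i + 1 : ℕ) : MvPolynomial (Fin n) K) * MvPolynomial.C κ * a (i + 1)) else 0 with hb
  have step2 : (∏ j, A j) - (∏ j, B j)
      = ∑ i ∈ Finset.range M, Polynomial.C (b i) * poch κP Polynomial.X i := by
    rw [hAexp, hBexp, ← Finset.sum_sub_distrib]
    have lhs_eq : ∀ i, Polynomial.C (a i) * poch κP Polynomial.X i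
        - Polynomial.C (a i) * poch κP (Polynomial.X + κP) i
        = Polynomial.C (a i) * (poch κP Polynomial.X i - poch κP (Polynomial.X + κP) i) := by
      intro i; ring
    rw [Finset.sum_congr rfl fun i _ => lhs_eq i]
    rw [hM0, Finset.sum_range_succ', Finset.sum_range_succ]
    have h0 : Polynomial.C (a 0) * (poch κP Polynomial.X 0 - poch κP (Polynomial.X + κP) 0)
        = 0 := by
      rw [poch_zero, poch_zero, sub_self, mul_zero]
    have hlast : Polynomial.C (b M0) * poch κP Polynomial.X M0 = 0 := by
      rw [hb]; simp
    rw [h0, hlast, add_zero, add_zero]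
    refine Finset.sum_congr rfl fun i hi => ?_
    have hiM0 : i < M0 := Finset.mem_range.mp hi
    rw [poch_shift]
    have hbval : b i = -(((i + 1 : ℕ) : MvPolynomial (Fin n) K) * MvPolynomial.C κ * a (i + 1)) := by
      rw [hb]; simp [hiM0]
    rw [hbval]
    have hcast : Polynomial.C (((i + 1 : ℕ) : MvPolynomial (Fin n) K)) = ((i + 1 : ℕ) : Polynomial (MvPolynomial (Fin n) K)) := by
      rw [map_natCast]
    rw [map_neg, map_mul, map_mul, hcast, ← hκP]
    ring
  -- Step 5 : the hypothesis expansion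
  set q : ℕ → (MvPolynomial (Fin n) K) := fun i => if i < N then ∑ c : Fin n, Qc c i else 0 with hq
  have hswap : ∑ c : Fin n, Qpoly n (k' + 1) κ c
      = ∑ i ∈ Finset.range N, Polynomial.C (∑ c : Fin n, Qc c i) * poch κP Polynomial.X i := by
    rw [Finset.sum_congr rfl fun c _ => hQc c, Finset.sum_comm]
    refine Finset.sum_congr rfl fun i _ => ?_
    rw [← Finset.sum_mul, ← map_sum]
  have hQsum : ∑ c : Fin n, Qpoly n (k' + 1) κ c
      = ∑ i ∈ Finset.range M, Polynomial.C (q i) * poch κP Polynomial.X i := by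
    rw [hswap]
    have e1 : ∑ i ∈ Finset.range N, Polynomial.C (∑ c : Fin n, Qc c i) * poch κP Polynomial.X i
        = ∑ i ∈ Finset.range N, Polynomial.C (q i) * poch κP Polynomial.X i := by
      refine Finset.sum_congr rfl fun i hi => ?_
      rw [hq]
      simp [Finset.mem_range.mp hi]
    rw [e1]
    refine Finset.sum_subset (Finset.range_subset_range.mpr (le_max_left _ _)) fun i _ hiN => ?_
    rw [hq]
    simp only [Finset.mem_range] at hiN
    simp [hiN]
  -- Step 6 : uniqueness and conclusion
  have hfin : ∀ i < M, q i = b i := by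
    apply expansion_unique' (MvPolynomial.C κ) M q b
    rw [← hκP, ← hQsum, step1, step2]
  have hlt : ℓ * p - 1 < M := lt_of_lt_of_le hN (le_max_left _ _)
  have hthis := hfin (ℓ * p - 1) hlt
  simp only [hq, hb] at hthis
  rw [if_pos hN] at hthis
  have hppos : 0 < p := (Fact.out : p.Prime).pos
  have hℓp : 0 < ℓ * p := Nat.mul_pos hℓ hppos
  have hzero : (if ℓ * p - 1 < M0 then
      -(((ℓ * p - 1 + 1 : ℕ) : MvPolynomial (Fin n) K) * MvPolynomial.C κ * a (ℓ * p - 1 + 1)) else 0) = 0 := by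
    split
    · have hsucc : ℓ * p - 1 + 1 = ℓ * p := by omega
      rw [hsucc]
      have hcast0 : ((ℓ * p : ℕ) : MvPolynomial (Fin n) K) = 0 := by
        rw [Nat.cast_mul]
        have hpz : ((p : ℕ) : MvPolynomial (Fin n) K) = 0 := by
          rw [← map_natCast (MvPolynomial.C : K →+* MvPolynomial (Fin n) K), CharP.cast_eq_zero K p, map_zero]
        rw [hpz, mul_zero]
      rw [hcast0, zero_mul, zero_mul, neg_zero]
    · rfl
  rw [hzero] at hthis
  exact hthis
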